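/- Let B and B' be unital associative algebras over ℂ with B' having a countable basis, let M' be a simple B'-module, and let M be a B-module. Then every (B ⊗ B')-submodule of M ⊗ M' is of the form N ⊗ M' for some B-submodule N of M. -/

import Mathlib

open TensorProduct

open Polynomial

theorem linIndep_sub_inv_of_transcendental {D : Type*} [DivisionRing D] [Algebra ℂ D]
    {d : D} (hd : Transcendental ℂ d) :
    LinearIndependent ℂ (fun a : ℂ => (d - algebraMap ℂ D a)⁻¹) := by
  classical
  have hdc : d ∈ Set.centralizer {d} := fun m hm => by
    rw [Set.mem_singleton_iff] at hm; rw [hm]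
  set Z : Subalgebra ℂ D := Subalgebra.centralizer ℂ (Set.centralizer {d}) with hZ
  have hdZ : d ∈ Z := by
    rw [hZ, Subalgebra.mem_centralizer_iff]
    exact fun g hg => (hg d rfl).symm
  have hZsub : ∀ z ∈ Z, z ∈ Set.centralizer {d} := fun z hz g hg => by
    rw [Set.mem_singleton_iff] at hg
    rw [hg]
    exact (Subalgebra.mem_centralizer_iff ℂ).1 hz d hdc
  have hcomm : ∀ y z : Z, y * z = z * y := fun y z =>
    Subtype.ext (by
      rw [MulMemClass.coe_mul, MulMemClass.coe_mul]
      exact ((Subalgebra.mem_centralizer_iff ℂ).1 z.2 (y : D) (hZsub _ y.2)))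
  have hinv : ∀ y : Z, (y : D)⁻¹ ∈ Z := fun y =>
    (Subalgebra.mem_centralizer_iff ℂ).2 (fun g hg =>
      (Commute.inv_right₀ ((Subalgebra.mem_centralizer_iff ℂ).1 y.2 g hg)))
  letI : CommRing Z := { (inferInstance : Ring Z) with mul_comm := hcomm }
  haveI : Nontrivial Z := nontrivial_of_ne 0 1 (fun h => by
    have := congrArg Subtype.val h
    rw [ZeroMemClass.coe_zero, OneMemClass.coe_one] at this
    exact zero_ne_one this)
  letI : Field Z := Field.ofIsUnitOrEqZero (fun a => by
    by_cases ha : a = 0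
    · exact Or.inr ha
    · have ha' : (a : D) ≠ 0 := fun h => ha (Subtype.ext (by rw [h, ZeroMemClass.coe_zero]))
      refine Or.inl ⟨⟨a, ⟨(a : D)⁻¹, hinv a⟩, ?_, ?_⟩, rfl⟩
      · exact Subtype.ext (by rw [MulMemClass.coe_mul]; exact mul_inv_cancel₀ ha')
      · exact Subtype.ext (by rw [MulMemClass.coe_mul]; exact inv_mul_cancel₀ ha'))
  have hdZ' : Transcendental ℂ (⟨d, hdZ⟩ : Z) := by
    rw [transcendental_iff] at hd ⊢
    intro p hp
    apply hd p
    have h1 := Polynomial.aeval_algHom_apply Z.val (⟨d, hdZ⟩ : Z) p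
    rw [hp, map_zero, show Z.val (⟨d, hdZ⟩ : Z) = d from rfl] at h1
    exact h1
  have hli : LinearIndependent ℂ (fun a : ℂ => ((⟨d, hdZ⟩ : Z) - algebraMap ℂ Z a)⁻¹) :=
    hdZ'.linearIndependent_sub_inv
  have hmap := hli.map' Z.val.toLinearMap (LinearMap.ker_eq_bot.2 Subtype.val_injective)
  convert hmap using 1
  case e'_5 => rfl
  case e'_6 => rfl
  funext a
  show (d - algebraMap ℂ D a)⁻¹ = (((⟨d, hdZ⟩ : Z) - algebraMap ℂ Z a)⁻¹ : Z).val
  by_cases h : (⟨d, hdZ⟩ : Z) - algebraMap ℂ Z a = 0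
  · have hD : d - algebraMap ℂ D a = 0 := by
      have := congrArg Subtype.val h
      simpa using this
    rw [h, hD]
    simp
  · have h1 : (((⟨d, hdZ⟩ : Z) - algebraMap ℂ Z a)⁻¹ : Z).val *
        (d - algebraMap ℂ D a) = 1 := by
      have h2 := congrArg Subtype.val (inv_mul_cancel₀ h)
      rw [MulMemClass.coe_mul] at h2
      simpa using h2
    exact inv_eq_of_mul_eq_one_left h1

theorem algebraMap_surj_of_countable_rank {D : Type*} [DivisionRing D] [Algebra ℂ D]
    (h : Module.rank ℂ D ≤ Cardinal.aleph0) : Function.Surjective (algebraMap ℂ D) := by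
  have halg : ∀ d : D, IsAlgebraic ℂ d := by
    intro d
    by_contra hd
    have hli := linIndep_sub_inv_of_transcendental (D := D) hd
    have hcard := hli.cardinal_lift_le_rank
    rw [Cardinal.mk_complex] at hcard
    have h3 := hcard.trans (Cardinal.lift_le.2 h)
    rw [Cardinal.lift_aleph0, Cardinal.lift_continuum] at h3
    exact absurd h3 (not_le.2 Cardinal.aleph0_lt_continuum)
  haveI : Algebra.IsIntegral ℂ D := ⟨fun d => (halg d).isIntegral⟩
  exact IsAlgClosed.algebraMap_bijective_of_isIntegral.2

theorem end_eq_smul_id {B' M' : Type*} [Ring B'] [Algebra ℂ B']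
    [AddCommGroup M'] [Module ℂ M'] [Module B' M']
    [IsScalarTower ℂ B' M'] [SMulCommClass B' ℂ M']
    (ι : Type*) [Countable ι] (bas : Module.Basis ι ℂ B')
    [IsSimpleModule B' M'] (f : Module.End B' M') :
    ∃ c : ℂ, f = c • (LinearMap.id : M' →ₗ[B'] M') := by
  classical
  haveI : Nontrivial M' := IsSimpleModule.nontrivial B' M'
  obtain ⟨x, hx⟩ := exists_ne (0 : M')
  -- rank of B' over ℂ is countable
  have hB' : Module.rank ℂ B' ≤ Cardinal.aleph0 := by
    rw [← Cardinal.lift_le_aleph0, ← bas.mk_eq_rank]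
    exact Cardinal.lift_le_aleph0.2 Cardinal.mk_le_aleph0
  -- M' is a quotient of B'
  have hM' : Module.rank ℂ M' ≤ Cardinal.aleph0 := by
    let g : B' →ₗ[ℂ] M' :=
      { toFun := fun r => r • x
        map_add' := fun a b => add_smul a b x
        map_smul' := fun c r => smul_assoc c r x }
    have hg : Function.Surjective g := IsSimpleModule.toSpanSingleton_surjective B' hx
    exact Cardinal.lift_le_aleph0.1
      ((g.lift_rank_le_of_surjective hg).trans (Cardinal.lift_le_aleph0.2 hB'))
  -- End embeds into M'
  have hEnd : Module.rank ℂ (Module.End B' M') ≤ Cardinal.aleph0 := by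
    let e : Module.End B' M' →ₗ[ℂ] M' :=
      { toFun := fun f => f x
        map_add' := fun a b => rfl
        map_smul' := fun c f => rfl }
    have he : Function.Injective e := by
      intro f g hfg
      have h4 : (f - g) x = 0 := by
        simp only [LinearMap.sub_apply, sub_eq_zero]
        exact hfg
      rcases LinearMap.injective_or_eq_zero (f - g) with h | h
      · have h5 : (f - g) x = (f - g) 0 := by rw [map_zero, h4]
        exact absurd (h h5) hx
      · exact sub_eq_zero.1 h
    exact (e.rank_le_of_injective he).trans hM'
  letI : DivisionRing (Module.End B' M') := Module.End.instDivisionRing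
  have hsurj := algebraMap_surj_of_countable_rank (D := Module.End B' M') hEnd
  obtain ⟨c, hc⟩ := hsurj f
  exact ⟨c, hc ▸ rfl⟩

theorem exists_separating {B' M' : Type*} [Ring B'] [AddCommGroup M'] [Module ℂ M']
    [Module B' M'] [SMulCommClass B' ℂ M'] [IsSimpleModule B' M']
    (hscalar : ∀ f : Module.End B' M', ∃ c : ℂ, f = c • (LinearMap.id : M' →ₗ[B'] M'))
    {n : ℕ} (x : Fin n → M') (hx : LinearIndependent ℂ x) (j : Fin n) :
    ∃ r : B', (∀ i, i ≠ j → r • x i = 0) ∧ r • x j ≠ 0 := by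
  classical
  by_contra hcon
  push_neg at hcon
  -- every r killing the x i (i ≠ j) also kills x j
  have hker : ∀ r : B', (∀ i, i ≠ j → r • x i = 0) → r • x j = 0 := hcon
  set ι₀ := {i : Fin n // i ≠ j} with hι₀
  let g : B' →ₗ[B'] (ι₀ → M') :=
    { toFun := fun r => fun i => r • x i
      map_add' := fun a b => by funext i; exact add_smul a b (x i)
      map_smul' := fun a r => by funext i; exact mul_smul a r (x i) }
  let h : B' →ₗ[B'] M' :=
    { toFun := fun r => r • x j
      map_add' := fun a b => add_smul a b (x j)
      map_smul' := fun a r => mul_smul a r (x j) }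
  have hkerle : LinearMap.ker g ≤ LinearMap.ker h := by
    intro r hr
    rw [LinearMap.mem_ker] at hr ⊢
    exact hker r (fun i hi => congrFun hr ⟨i, hi⟩)
  -- the map T = range g → M'
  let f₀ : LinearMap.range g →ₗ[B'] M' :=
    ((LinearMap.ker g).liftQ h hkerle).comp (g.quotKerEquivRange.symm : _ →ₗ[B'] _)
  have hf₀ : ∀ r : B', f₀ ⟨g r, LinearMap.mem_range_self g r⟩ = h r := by
    intro r
    have h1 : g.quotKerEquivRange.symm ⟨g r, LinearMap.mem_range_self g r⟩ =
        Submodule.Quotient.mk r := by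
      rw [LinearEquiv.symm_apply_eq]
      exact Subtype.ext (g.quotKerEquivRange_apply_mk r)
    show ((LinearMap.ker g).liftQ h hkerle) (g.quotKerEquivRange.symm _) = h r
    rw [h1]
    exact Submodule.liftQ_apply _ h r
  -- semisimplicity of ι₀ → M'
  haveI : IsSemisimpleModule B' M' := inferInstance
  haveI : IsSemisimpleModule B' (ι₀ → M') := by
    apply isSemisimpleModule_of_isSemisimpleModule_submodule'
      (p := fun i : ι₀ => LinearMap.range (LinearMap.single B' (fun _ : ι₀ => M') i))
    · intro i
      have e : M' ≃ₗ[B'] LinearMap.range (LinearMap.single B' (fun _ : ι₀ => M') i) :=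
        LinearEquiv.ofInjective _ (by
          rw [LinearMap.coe_single]; exact Pi.single_injective i)
      exact IsSemisimpleModule.congr e.symm
    · exact LinearMap.iSup_range_single B' _
  -- extend f₀ to all of ι₀ → M'
  obtain ⟨T', hT'⟩ := exists_isCompl (LinearMap.range g)
  let F : (ι₀ → M') →ₗ[B'] M' :=
    f₀.comp (Submodule.projectionOnto _ _ hT')
  have hF : ∀ r : B', F (g r) = h r := by
    intro r
    show f₀ (Submodule.projectionOnto _ _ hT' (g r)) = h r
    rw [show g r = ((⟨g r, LinearMap.mem_range_self g r⟩ : LinearMap.range g) : ι₀ → M')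
      from rfl, Submodule.projectionOnto_apply_left hT']
    exact hf₀ r
  -- the components of F are scalars
  have key : x j ∈ Submodule.span ℂ (x '' {i | i ≠ j}) := by
    have h1 : (x j : M') = F (g 1) := by rw [hF]; show x j = (1 : B') • x j; rw [one_smul]
    have h2 : g 1 = ∑ i : ι₀, Pi.single i (g 1 i) := (Finset.univ_sum_single (g 1)).symm
    rw [h1, h2, map_sum]
    apply Submodule.sum_mem
    intro i _
    obtain ⟨c, hc⟩ := hscalar (F.comp (LinearMap.single B' (fun _ : ι₀ => M') i))
    have h3 : F (Pi.single i (g 1 i)) = c • (g 1 i) := by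
      have := congrArg (fun φ => φ (g 1 i)) hc
      simpa using this
    have h4 : g 1 i = x i := one_smul _ _
    rw [h3, h4]
    exact Submodule.smul_mem _ c (Submodule.subset_span ⟨i, i.2, rfl⟩)
  exact hx.notMem_span_image (by simp : j ∉ {i | i ≠ j}) key

/-- Let `B, B'` be unital associative `ℂ`-algebras with `B'` having a countable basis, let
`M'` be a simple `B'`-module and `M` a `B`-module.  A `(B ⊗ B')`-submodule of `M ⊗ M'`
is a `ℂ`-subspace invariant under the actions of `B` (on the first factor) and of `B'`
(on the second factor).  Every such submodule is of the form `N ⊗ M'` for some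
`B`-submodule `N` of `M`. -/
theorem stmt4 (B B' M M' : Type*) [Ring B] [Algebra ℂ B] [Ring B'] [Algebra ℂ B']
    [AddCommGroup M] [Module ℂ M] [Module B M]
    [IsScalarTower ℂ B M] [SMulCommClass B ℂ M]
    [AddCommGroup M'] [Module ℂ M'] [Module B' M']
    [IsScalarTower ℂ B' M'] [SMulCommClass B' ℂ M']
    (ι : Type*) [Countable ι] (bas : Module.Basis ι ℂ B')
    [IsSimpleModule B' M']
    (P : Submodule ℂ (M ⊗[ℂ] M'))
    (hB : ∀ (b : B), ∀ z ∈ P,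
      LinearMap.rTensor M' (DistribMulAction.toLinearMap ℂ M b) z ∈ P)
    (hB' : ∀ (b' : B'), ∀ z ∈ P,
      LinearMap.lTensor M (DistribMulAction.toLinearMap ℂ M' b') z ∈ P) :
    ∃ N : Submodule B M,
      P = LinearMap.range
        (TensorProduct.map (N.restrictScalars ℂ).subtype
          (LinearMap.id : M' →ₗ[ℂ] M')) := by
  classical
  have hscalar := end_eq_smul_id ι bas (M' := M')
  -- the candidate submodule
  set N : Submodule B M :=
    { carrier := {m | ∀ w : M', m ⊗ₜ[ℂ] w ∈ P}
      add_mem' := fun {a b} ha hb w => by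
        rw [TensorProduct.add_tmul]; exact P.add_mem (ha w) (hb w)
      zero_mem' := fun w => by
        rw [TensorProduct.zero_tmul]; exact P.zero_mem
      smul_mem' := fun b m hm w => by
        have h1 := hB b _ (hm w)
        rwa [LinearMap.rTensor_tmul] at h1 } with hN
  have hNmem : ∀ m : M, m ∈ N.restrictScalars ℂ ↔ ∀ w : M', m ⊗ₜ[ℂ] w ∈ P :=
    fun m => Iff.rfl
  refine ⟨N, ?_⟩
  apply le_antisymm
  · -- P ≤ range
    intro z hz
    -- basis of M'
    set bas' : Module.Basis (Module.Basis.ofVectorSpaceIndex ℂ M') ℂ M' := Module.Basis.ofVectorSpace ℂ M' with hbas'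
    set κ := Module.Basis.ofVectorSpaceIndex ℂ M'
    -- the equivalence M ⊗ M' ≃ κ →₀ M
    set E : M ⊗[ℂ] M' ≃ₗ[ℂ] (κ →₀ M) :=
      (TensorProduct.congr (LinearEquiv.refl ℂ M) bas'.repr).trans
        (TensorProduct.finsuppScalarRight ℂ ℂ M κ) with hE
    have hEsymm : ∀ (k : κ) (m : M), E.symm (Finsupp.single k m) = m ⊗ₜ[ℂ] bas' k := by
      intro k m
      rw [hE]
      simp only [LinearEquiv.trans_symm, LinearEquiv.trans_apply,
        TensorProduct.finsuppScalarRight_symm_apply_single, TensorProduct.congr_symm_tmul,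
        LinearEquiv.refl_symm, LinearEquiv.refl_apply, Module.Basis.repr_symm_single_one]
    have hrep : z = ∑ k ∈ (E z).support, (E z k) ⊗ₜ[ℂ] bas' k := by
      have h0 := congrArg E.symm (Finsupp.sum_single (E z))
      rw [Finsupp.sum, map_sum, E.symm_apply_apply] at h0
      exact h0.symm.trans (Finset.sum_congr rfl fun k _ => hEsymm k (E z k))
    set s := (E z).support with hs
    -- each coefficient lies in N
    have hcoef : ∀ k ∈ s, ∀ w : M', (E z k) ⊗ₜ[ℂ] w ∈ P := by
      intro k hk
      -- set up the linearly independent family indexed by Fin s.card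
      set n := s.card
      set e := s.equivFin with he
      set x : Fin n → M' := fun i => bas' ((e.symm i) : κ) with hx
      have hxli : LinearIndependent ℂ x := by
        have h1 : Function.Injective (fun i : Fin n => ((e.symm i : s) : κ)) :=
          Subtype.val_injective.comp e.symm.injective
        exact bas'.linearIndependent.comp _ h1
      set j := e ⟨k, hk⟩ with hj
      obtain ⟨r, hr0, hrj⟩ := exists_separating hscalar x hxli j
      -- apply r to z
      have hrz := hB' r z hz
      have hsum : LinearMap.lTensor M (DistribMulAction.toLinearMap ℂ M' r) z
          = (E z k) ⊗ₜ[ℂ] (r • bas' k) := by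
        conv_lhs => rw [hrep]
        rw [map_sum]
        rw [Finset.sum_eq_single k]
        · rw [LinearMap.lTensor_tmul]; rfl
        · intro k' hk' hne
          rw [LinearMap.lTensor_tmul]
          have h2 : r • bas' k' = 0 := by
            have h3 : e ⟨k', hk'⟩ ≠ j := by
              rw [hj]
              intro hcon
              exact hne (congrArg Subtype.val (e.injective hcon))
            have h4 := hr0 (e ⟨k', hk'⟩) h3
            rw [hx] at h4
            simpa using h4
          show (E z k') ⊗ₜ[ℂ] (r • bas' k') = 0
          rw [h2, TensorProduct.tmul_zero]
        · intro hk0; exact absurd hk hk0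
      rw [hsum] at hrz
      have hw0 : r • bas' k ≠ 0 := by
        have hxj : x j = bas' k := by rw [hx, hj]; simp
        rwa [hxj] at hrj
      -- the set of w with (E z k) ⊗ w ∈ P is a B'-submodule
      set Q : Submodule B' M' :=
        { carrier := {w | (E z k) ⊗ₜ[ℂ] w ∈ P}
          add_mem' := fun {a b} ha hb => by
            show (E z k) ⊗ₜ[ℂ] (a + b) ∈ P
            rw [TensorProduct.tmul_add]; exact P.add_mem ha hb
          zero_mem' := by
            show (E z k) ⊗ₜ[ℂ] (0 : M') ∈ P
            rw [TensorProduct.tmul_zero]; exact P.zero_mem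
          smul_mem' := fun r' w hw => by
            have h1 := hB' r' _ hw
            rwa [LinearMap.lTensor_tmul] at h1 } with hQ
      have hQtop : Q = ⊤ := by
        rcases eq_bot_or_eq_top Q with h | h
        · exfalso
          have : (r • bas' k) ∈ Q := hrz
          rw [h] at this
          exact hw0 (by simpa using this)
        · exact h
      intro w
      have : w ∈ Q := hQtop ▸ Submodule.mem_top
      exact this
    -- conclude z in the range
    rw [hrep]
    apply Submodule.sum_mem
    intro k hk
    exact ⟨(⟨E z k, (hNmem _).2 (hcoef k hk)⟩ : N.restrictScalars ℂ) ⊗ₜ[ℂ] bas' k,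
      by rw [TensorProduct.map_tmul]; rfl⟩
  · -- range ≤ P
    rw [TensorProduct.range_map_eq_span_tmul]
    apply Submodule.span_le.2
    rintro t ⟨m, w, rfl⟩
    exact (hNmem m.1).1 m.2 w
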